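/- Suppose n is even, the interaction graph is complete (N_i = V \ {i} for every i), and the initial opinions are symmetric about 1/2: for every i ∈ {1,…,n/2} there exists η_i(0) ∈ (0,1/2) with p_i(0) = 1/2 − η_i(0) and p_{n/2+i}(0) = 1/2 + η_i(0). Let ε* denote the unique positive solution of x³ + x²/(2(n−1)) + (3/4)x − 1/(8(n−1)) = 0; then ε* < 1/(6(n−1)), and there exists k* ∈ ℕ such that for all k ≥ k* and all j ∈ V: |p_j(k) − 1/2| ≤ ε* and (p_j(k) − 1/2)(p_j(k+1) − 1/2) < 0. -/

import Mathlib

private lemma codaF1 (c ε : ℝ) (hc : 1 ≤ c) (hε : 0 < ε)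
    (hroot : 8*c*ε^3 + 4*ε^2 + 6*c*ε - 1 = 0) : ε < 1/(6*c) := by
  rw [lt_div_iff₀ (by linarith)]
  nlinarith [pow_pos hε 3, sq_nonneg ε]

private lemma codaF2 (c ε : ℝ) (hc : 1 ≤ c) (hε : 0 < ε)
    (hroot : 8*c*ε^3 + 4*ε^2 + 6*c*ε - 1 = 0) : 1 < 8*c*ε := by
  have h6 : ε*(6*c) < 1 := (lt_div_iff₀ (by linarith)).mp (codaF1 c ε hc hε hroot)
  nlinarith [mul_pos hε hε, mul_pos (mul_pos hε hε) hε, sq_nonneg (c*ε),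
    mul_pos hε (by linarith : (0:ℝ) < c)]

private lemma codaG1 (c ε x : ℝ) (hc : 1 ≤ c) (hε : 0 < ε)
    (hroot : 8*c*ε^3 + 4*ε^2 + 6*c*ε - 1 = 0) (hx0 : 0 < x) (hxε : x < ε) :
    8*c*x^3 + 4*x^2 + 6*c*x - 1 < 0 := by
  nlinarith [mul_pos (sub_pos.2 hxε)
    (by nlinarith [mul_pos hε hx0, sq_nonneg ε, sq_nonneg x] :
      (0:ℝ) < 8*c*(ε^2+ε*x+x^2) + 4*(ε+x) + 6*c)]

private lemma codaG2 (c ε x : ℝ) (hc : 1 ≤ c) (hε : 0 < ε)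
    (hroot : 8*c*ε^3 + 4*ε^2 + 6*c*ε - 1 = 0) (hx : ε < x) :
    0 < 8*c*x^3 + 4*x^2 + 6*c*x - 1 := by
  have hx0 : 0 < x := hε.trans hx
  nlinarith [mul_pos (sub_pos.2 hx)
    (by nlinarith [mul_pos hε hx0, sq_nonneg ε, sq_nonneg x] :
      (0:ℝ) < 8*c*(ε^2+ε*x+x^2) + 4*(ε+x) + 6*c)]

private def codaLo (m : ℕ) (a : Fin m) : Fin (2*m) := ⟨a.1, by have := a.2; omega⟩
private def codaHi (m : ℕ) (a : Fin m) : Fin (2*m) := ⟨a.1 + m, by have := a.2; omega⟩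

set_option maxHeartbeats 2000000 in
/-- CODA model on the complete graph, even number of agents, initial opinions
symmetric about `1/2`: with `ε*` the unique positive root of
`x³ + x²/(2(n-1)) + (3/4)x - 1/(8(n-1))`, one has `ε* < 1/(6(n-1))` and eventually
every opinion stays within `ε*` of `1/2` and oscillates around `1/2` at each step. -/
theorem stmt_15
    (n m : ℕ) (hm : 1 ≤ m) (hn : n = 2 * m)
    (N : Fin n → Finset (Fin n))
    (hcomplete : ∀ i, N i = Finset.univ \ {i})
    (p : Fin n → ℕ → ℝ) (q : Fin n → ℕ → ℕ)
    (hq0 : ∀ i k, (p i k < 1 / 2 ∨ (p i k = 1 / 2 ∧ p i (k - 1) < 1 / 2)) → q i k = 0)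
    (hq1 : ∀ i k, ¬(p i k < 1 / 2 ∨ (p i k = 1 / 2 ∧ p i (k - 1) < 1 / 2)) → q i k = 1)
    (hupd : ∀ i k, p i (k + 1) =
      p i k + p i k * (1 - p i k) / (N i).card * ∑ j ∈ N i, ((q j k : ℝ) - p i k))
    (hsym0 : ∀ i : Fin n, ∀ h : i.val < m, ∃ η : ℝ, η ∈ Set.Ioo (0 : ℝ) (1 / 2) ∧
      p i 0 = 1 / 2 - η ∧ p ⟨i.val + m, by omega⟩ 0 = 1 / 2 + η)
    (g : ℝ → ℝ)
    (hg : ∀ x, g x = x ^ 3 + x ^ 2 / (2 * ((n : ℝ) - 1)) + 3 / 4 * x -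
      1 / (8 * ((n : ℝ) - 1)))
    (εstar : ℝ) (hεpos : 0 < εstar) (hεroot : g εstar = 0)
    (hεuniq : ∀ y : ℝ, 0 < y → g y = 0 → y = εstar) :
    εstar < 1 / (6 * ((n : ℝ) - 1)) ∧
    ∃ kstar : ℕ, ∀ k ≥ kstar, ∀ j : Fin n,
      |p j k - 1 / 2| ≤ εstar ∧ (p j k - 1 / 2) * (p j (k + 1) - 1 / 2) < 0 := by
  subst hn
  set c : ℝ := 2*(m:ℝ) - 1 with hc_def
  have hcast : ((2*m : ℕ) : ℝ) - 1 = c := by push_cast; ring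
  have hc : 1 ≤ c := by
    have : (1:ℝ) ≤ (m:ℝ) := by exact_mod_cast hm
    simp only [hc_def]; linarith
  have hc0 : (0:ℝ) < c := by linarith
  have hmc : (m:ℝ) = (c+1)/2 := by simp only [hc_def]; ring
  -- q is 0 or 1
  have hq01 : ∀ (i : Fin (2*m)) k, q i k = 0 ∨ q i k = 1 := by
    intro i k
    by_cases h : (p i k < 1 / 2 ∨ (p i k = 1 / 2 ∧ p i (k - 1) < 1 / 2))
    · exact Or.inl (hq0 i k h)
    · exact Or.inr (hq1 i k h)
  -- cardinality
  have hcardN : ∀ i, ((N i).card : ℝ) = c := by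
    intro i
    rw [hcomplete i, Finset.card_sdiff_of_subset (Finset.subset_univ _)]
    simp only [Finset.card_univ, Fintype.card_fin, Finset.card_singleton]
    rw [Nat.cast_sub (by omega)]
    simp only [hc_def]
    push_cast
    ring
  -- total action sum
  have hS : ∀ k, (∀ a : Fin m, (q (codaHi m a) k : ℝ) = 1 - (q (codaLo m a) k : ℝ)) →
      ∑ j : Fin (2*m), (q j k : ℝ) = m := by
    intro k hqc
    set F : ℕ → ℝ := fun a => if h : a < 2*m then (q ⟨a,h⟩ k : ℝ) else 0 with hF
    have h1 : ∑ j : Fin (2*m), (q j k : ℝ) = ∑ j : Fin (2*m), F j.val := by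
      apply Finset.sum_congr rfl; intro j _
      simp only [hF]; rw [dif_pos j.isLt]
    rw [h1, Fin.sum_univ_eq_sum_range, Finset.range_eq_Ico,
      ← Finset.sum_Ico_consecutive F (Nat.zero_le m) (by omega : m ≤ 2*m),
      ← Finset.range_eq_Ico, Finset.sum_Ico_eq_sum_range,
      (by omega : 2*m - m = m), ← Finset.sum_add_distrib]
    have h4 : ∀ a ∈ Finset.range m, F a + F (m + a) = 1 := by
      intro a ha
      have ham : a < m := Finset.mem_range.mp ha
      have e1 : F a = (q (codaLo m ⟨a, ham⟩) k : ℝ) := by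
        simp only [hF]; rw [dif_pos (by omega : a < 2*m)]; rfl
      have e2 : F (m + a) = (q (codaHi m ⟨a, ham⟩) k : ℝ) := by
        simp only [hF]; rw [dif_pos (by omega : m + a < 2*m)]
        have : (⟨m+a, by omega⟩ : Fin (2*m)) = codaHi m ⟨a, ham⟩ := by
          apply Fin.ext; simp [codaHi]; omega
        rw [this]
      rw [e1, e2, hqc ⟨a, ham⟩]; ring
    rw [Finset.sum_congr rfl h4]
    simp
  -- recurrence (given complementarity at step k)
  have hrec : ∀ k, (∀ a : Fin m, (q (codaHi m a) k : ℝ) = 1 - (q (codaLo m a) k : ℝ)) →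
      ∀ i, p i (k+1) = p i k + p i k * (1 - p i k) / c * ((m:ℝ) - (q i k : ℝ) - c * p i k) := by
    intro k hqc i
    have hsum : ∑ j ∈ N i, ((q j k : ℝ) - p i k) = (m:ℝ) - (q i k : ℝ) - c * p i k := by
      rw [hcomplete i, Finset.sum_sdiff_eq_sub (Finset.subset_univ _),
        Finset.sum_sub_distrib, Finset.sum_const, Finset.card_univ, Fintype.card_fin,
        hS k hqc, Finset.sum_singleton]
      have h2m : ((2*m : ℕ):ℝ) = c + 1 := by rw [← hcast]; ring
      rw [nsmul_eq_mul, h2m]; ring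
    rw [hupd i k, hcardN i, hsum]
  -- complementarity from symmetry invariants
  have hqcOf : ∀ k, (∀ a : Fin m, p (codaHi m a) k = 1 - p (codaLo m a) k) →
      (∀ a : Fin m, p (codaHi m a) (k-1) = 1 - p (codaLo m a) (k-1)) →
      (∀ j, ¬(p j k = 1/2 ∧ p j (k-1) = 1/2)) →
      ∀ a : Fin m, (q (codaHi m a) k : ℝ) = 1 - (q (codaLo m a) k : ℝ) := by
    intro k hA hA' hD a
    rcases lt_trichotomy (p (codaLo m a) k) (1/2) with h | h | h
    · rw [hq0 (codaLo m a) k (Or.inl h), hq1 (codaHi m a) k (by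
        push_neg
        refine ⟨by rw [hA a]; linarith, fun he => absurd he (by rw [hA a]; intro hh; linarith)⟩)]
      norm_num
    · have hprev : p (codaLo m a) (k-1) ≠ 1/2 := fun hp => hD (codaLo m a) ⟨h, hp⟩
      rcases lt_or_gt_of_ne hprev with hp | hp
      · rw [hq0 (codaLo m a) k (Or.inr ⟨h, hp⟩), hq1 (codaHi m a) k (by
          push_neg
          constructor
          · rw [hA a, h]; norm_num
          · intro _; rw [hA' a]; linarith)]
        norm_num
      · rw [hq1 (codaLo m a) k (by push_neg; exact ⟨by linarith, fun _ => by linarith⟩),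
          hq0 (codaHi m a) k (Or.inr ⟨by rw [hA a, h]; norm_num, by rw [hA' a]; linarith⟩)]
        norm_num
    · rw [hq1 (codaLo m a) k (by push_neg; exact ⟨by linarith, fun he => absurd he (by linarith)⟩),
        hq0 (codaHi m a) k (Or.inl (by rw [hA a]; linarith))]
      norm_num
  -- initial data
  have hlo0 : ∀ a : Fin m, 0 < p (codaLo m a) 0 ∧ p (codaLo m a) 0 < 1/2 := by
    intro a
    obtain ⟨η, hη, h1, _⟩ := hsym0 (codaLo m a) a.2
    rw [h1]
    constructor <;> [linarith [hη.2]; linarith [hη.1]]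
  have hA0 : ∀ a : Fin m, p (codaHi m a) 0 = 1 - p (codaLo m a) 0 := by
    intro a
    obtain ⟨η, hη, h1, h2⟩ := hsym0 (codaLo m a) a.2
    have h2' : p (codaHi m a) 0 = 1/2 + η := h2
    rw [h1, h2']; ring
  have hne0 : ∀ j : Fin (2*m), p j 0 ≠ 1/2 := by
    intro j
    by_cases hj : j.val < m
    · have hje : j = codaLo m ⟨j.val, hj⟩ := Fin.ext rfl
      rw [hje]
      exact ne_of_lt (hlo0 ⟨j.val, hj⟩).2
    · have hje : j = codaHi m ⟨j.val - m, by have := j.isLt; omega⟩ := by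
        apply Fin.ext; simp [codaHi]; omega
      rw [hje, hA0]
      have := (hlo0 ⟨j.val - m, by have := j.isLt; omega⟩).2
      intro hcon; linarith
  -- the master invariant
  have hInv : ∀ k, (∀ a : Fin m, p (codaHi m a) k = 1 - p (codaLo m a) k) ∧
      (∀ a : Fin m, p (codaHi m a) (k-1) = 1 - p (codaLo m a) (k-1)) ∧
      (∀ j, ¬(p j k = 1/2 ∧ p j (k-1) = 1/2)) := by
    intro k
    induction k with
    | zero =>
      exact ⟨hA0, hA0, fun j hj => hne0 j hj.1⟩
    | succ k ih =>
      obtain ⟨hA, hA', hD⟩ := ih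
      have hqck := hqcOf k hA hA' hD
      have hAn : ∀ a : Fin m, p (codaHi m a) (k+1) = 1 - p (codaLo m a) (k+1) := by
        intro a
        rw [hrec k hqck (codaHi m a), hrec k hqck (codaLo m a), hqck a, hA a, hmc]
        field_simp
        ring
      refine ⟨hAn, by simpa using hA, ?_⟩
      rintro j ⟨h1, h0⟩
      simp only [Nat.add_sub_cancel] at h0
      have hr := hrec k hqck j
      rw [h0, h1, hmc] at hr
      rcases hq01 j k with hq | hq <;> rw [hq] at hr <;> push_cast at hr <;>
        field_simp at hr <;> linarith
  have hqc : ∀ k, ∀ a : Fin m, (q (codaHi m a) k : ℝ) = 1 - (q (codaLo m a) k : ℝ) :=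
    fun k => hqcOf k (hInv k).1 (hInv k).2.1 (hInv k).2.2
  have hrec' : ∀ k i, p i (k+1) =
      p i k + p i k * (1 - p i k) / c * ((m:ℝ) - (q i k : ℝ) - c * p i k) :=
    fun k => hrec k (hqc k)
  -- polynomial form of g
  have gval : ∀ x, g x = (8*c*x^3 + 4*x^2 + 6*c*x - 1)/(8*c) := by
    intro x
    rw [hg x, hcast]
    field_simp
    ring
  have hroot8 : 8*c*εstar^3 + 4*εstar^2 + 6*c*εstar - 1 = 0 := by
    have := hεroot
    rw [gval] at this
    field_simp at this
    linarith
  -- step maps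
  have hstep0 : ∀ (i : Fin (2*m)) k, q i k = 0 →
      p i (k+1) - 1/2 = -(g (-(p i k - 1/2))) := by
    intro i k hq
    rw [hrec' k i, hq, gval]
    push_cast
    rw [hmc]
    field_simp
    ring
  have hstep1 : ∀ (i : Fin (2*m)) k, q i k = 1 →
      p i (k+1) - 1/2 = g (p i k - 1/2) := by
    intro i k hq
    rw [hrec' k i, hq, gval]
    push_cast
    rw [hmc]
    field_simp
    ring
  -- sign-determined steps
  have condTrue : ∀ (i : Fin (2*m)) k, p i k < 1/2 →
      p i (k+1) - 1/2 = -(g (-(p i k - 1/2))) :=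
    fun i k h => hstep0 i k (hq0 i k (Or.inl h))
  have condPos : ∀ (i : Fin (2*m)) k, 1/2 < p i k →
      p i (k+1) - 1/2 = g (p i k - 1/2) := by
    intro i k h
    refine hstep1 i k (hq1 i k ?_)
    push_neg
    exact ⟨by linarith, fun he => by linarith⟩
  -- analytic facts
  have h8c : (0:ℝ) < 8*c := by linarith
  have hF2 := codaF2 c εstar hc hεpos hroot8
  have h8cε : 1/(8*c) < εstar := by rw [div_lt_iff₀ h8c]; linarith
  have hgneg : ∀ x, 0 < x → x < εstar → -εstar < g x ∧ g x < 0 := by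
    intro x hx0 hxε
    rw [gval]
    constructor
    · rw [neg_lt, ← neg_div, div_lt_iff₀ h8c]
      nlinarith [pow_pos hx0 3, sq_nonneg x, mul_pos hc0 hx0]
    · exact div_neg_of_neg_of_pos (codaG1 c εstar x hc hεpos hroot8 hx0 hxε) h8c
  have hgpos : ∀ x, εstar < x → 0 < g x := fun x hx => by
    rw [gval]; exact div_pos (codaG2 c εstar x hc hεpos hroot8 hx) h8c
  have hg0 : g 0 = -(1/(8*c)) := by
    rw [gval]
    field_simp
    ring
  -- the trap
  have trapStep : ∀ (i : Fin (2*m)) k,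
      (-εstar < p i k - 1/2 ∧ p i k - 1/2 < εstar ∧ p i k - 1/2 ≠ 0) →
      ((-εstar < p i (k+1) - 1/2 ∧ p i (k+1) - 1/2 < εstar ∧ p i (k+1) - 1/2 ≠ 0) ∧
        (p i k - 1/2) * (p i (k+1) - 1/2) < 0) := by
    rintro i k ⟨hl, hr, hne⟩
    rcases lt_or_gt_of_ne hne with he | he
    · have hstep := condTrue i k (by linarith)
      obtain ⟨hg1, hg2⟩ := hgneg (-(p i k - 1/2)) (by linarith) (by linarith)
      have hpos : 0 < p i (k+1) - 1/2 := by rw [hstep]; linarith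
      have hlt : p i (k+1) - 1/2 < εstar := by rw [hstep]; linarith
      exact ⟨⟨by linarith, hlt, hpos.ne'⟩, mul_neg_of_neg_of_pos he hpos⟩
    · have hstep := condPos i k (by linarith)
      obtain ⟨hg1, hg2⟩ := hgneg (p i k - 1/2) (by linarith) (by linarith)
      have hneg2 : p i (k+1) - 1/2 < 0 := by rw [hstep]; linarith
      have hgt : -εstar < p i (k+1) - 1/2 := by rw [hstep]; linarith
      exact ⟨⟨hgt, by linarith, hneg2.ne⟩, mul_neg_of_pos_of_neg he hneg2⟩
  have trapForever : ∀ (i : Fin (2*m)) K,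
      (-εstar < p i K - 1/2 ∧ p i K - 1/2 < εstar ∧ p i K - 1/2 ≠ 0) →
      ∀ k, K ≤ k → (|p i k - 1/2| ≤ εstar ∧ (p i k - 1/2) * (p i (k+1) - 1/2) < 0) := by
    intro i K hK
    have hall : ∀ k, K ≤ k → (-εstar < p i k - 1/2 ∧ p i k - 1/2 < εstar ∧ p i k - 1/2 ≠ 0) := by
      intro k hk
      induction k, hk using Nat.le_induction with
      | base => exact hK
      | succ k hk ih => exact (trapStep i k ih).1
    intro k hk
    exact ⟨abs_le.2 ⟨by linarith [(hall k hk).1], le_of_lt (hall k hk).2.1⟩,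
      (trapStep i k (hall k hk)).2⟩
  -- hitting -εstar exactly
  have h8cpos : (0:ℝ) < 1/(8*c) := div_pos one_pos h8c
  have hitEps : ∀ (i : Fin (2*m)) k, p i k - 1/2 = -εstar →
      (-εstar < p i (k+1+1) - 1/2 ∧ p i (k+1+1) - 1/2 < εstar ∧ p i (k+1+1) - 1/2 ≠ 0) := by
    intro i k hk
    have h1 : p i (k+1) - 1/2 = 0 := by
      rw [condTrue i k (by linarith), hk, neg_neg, hεroot, neg_zero]
    have hplt : p i k < 1/2 := by linarith
    have hq : q i (k+1) = 0 := hq0 i (k+1) (Or.inr ⟨by linarith, by simpa using hplt⟩)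
    have h3 : p i (k+1+1) - 1/2 = 1/(8*c) := by
      rw [hstep0 i (k+1) hq, h1, neg_zero, hg0, neg_neg]
    rw [h3]
    exact ⟨by linarith, h8cε, h8cpos.ne'⟩
  -- reaching the trap
  have reach : ∀ (i : Fin (2*m)), 0 < p i 0 → p i 0 < 1/2 →
      ∃ K, (-εstar < p i K - 1/2 ∧ p i K - 1/2 < εstar ∧ p i K - 1/2 ≠ 0) := by
    intro i hp0 hp1
    set e0 := p i 0 - 1/2 with he0def
    have he0l : -(1/2) < e0 := by simp only [he0def]; linarith
    have he0r : e0 < 0 := by simp only [he0def]; linarith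
    set δ := (1/4 - e0^2)/(2*c) with hδdef
    have hδ : 0 < δ := div_pos (by nlinarith) (by linarith)
    clear_value e0 δ
    have MN : ∀ k : ℕ,
        (∃ K, (-εstar < p i K - 1/2 ∧ p i K - 1/2 < εstar ∧ p i K - 1/2 ≠ 0)) ∨
        (-(1/2) < p i k - 1/2 ∧ p i k - 1/2 ≤ -εstar ∧ e0 + (k:ℝ)*δ ≤ p i k - 1/2) := by
      intro k
      induction k with
      | zero =>
        rcases lt_trichotomy e0 (-εstar) with h | h | h
        · right
          refine ⟨by rw [← he0def]; exact he0l, by rw [← he0def]; linarith,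
            by push_cast; rw [← he0def]; linarith⟩
        · left; exact ⟨0+1+1, hitEps i 0 (by rw [← he0def]; exact h)⟩
        · left
          exact ⟨0, by rw [← he0def]; exact ⟨h, by linarith, ne_of_lt he0r⟩⟩
      | succ k ih =>
        rcases ih with h | ⟨h1, h2, h3⟩
        · left; exact h
        rcases eq_or_lt_of_le h2 with he | he
        · left; exact ⟨k+1+1, hitEps i k he⟩
        have hkd : (0:ℝ) ≤ (k:ℝ)*δ := by positivity
        have hstep := condTrue i k (by linarith)
        set e := p i k - 1/2 with hedef
        clear_value e
        have hgp : 0 < g (-e) := hgpos (-e) (by linarith)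
        have hinc : -(g (-e)) - e = (1/4 - e^2)*(1/(2*c) - e) := by
          rw [gval]; field_simp; ring
        have hee0 : e0 ≤ e := by linarith
        have hb1 : 1/4 - e0^2 ≤ 1/4 - e^2 := by nlinarith [mul_nonneg (sub_nonneg.2 hee0) (by linarith : (0:ℝ) ≤ -e0 - e)]
        have hδle : δ ≤ (1/4 - e^2)*(1/(2*c) - e) := by
          have h2c : (0:ℝ) < 1/(2*c) := by positivity
          calc δ = (1/4 - e0^2) * (1/(2*c)) := by rw [hδdef]; ring
          _ ≤ (1/4 - e^2)*(1/(2*c) - e) := by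
              apply mul_le_mul hb1 (by linarith) (le_of_lt h2c) (by nlinarith [sq_nonneg e, he, hεpos])
        have hnew : e + δ ≤ p i (k+1) - 1/2 := by rw [hstep]; linarith
        have hneg : p i (k+1) - 1/2 < 0 := by rw [hstep]; linarith
        rcases le_or_gt (p i (k+1) - 1/2) (-εstar) with hc2 | hc2
        · right
          refine ⟨by linarith, hc2, ?_⟩
          push_cast
          linarith
        · left; exact ⟨k+1, hc2, by linarith, ne_of_lt hneg⟩
    obtain ⟨k0, hk0⟩ := exists_nat_gt ((-e0)/δ)
    rcases MN k0 with h | ⟨_, h2, h3⟩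
    · exact h
    · exfalso
      rw [div_lt_iff₀ hδ] at hk0
      linarith [hεpos]
  -- conclusion
  refine ⟨by rw [hcast]; exact codaF1 c εstar hc hεpos hroot8, ?_⟩
  have main : ∀ a : Fin m, ∃ K, ∀ k, K ≤ k →
      (|p (codaLo m a) k - 1/2| ≤ εstar ∧
        (p (codaLo m a) k - 1/2) * (p (codaLo m a) (k+1) - 1/2) < 0) := by
    intro a
    obtain ⟨K, hK⟩ := reach (codaLo m a) (hlo0 a).1 (hlo0 a).2
    exact ⟨K, trapForever _ K hK⟩
  choose Kf hKf using main
  refine ⟨Finset.univ.sup Kf, ?_⟩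
  intro k hk j
  by_cases hj : j.val < m
  · have hje : j = codaLo m ⟨j.val, hj⟩ := Fin.ext rfl
    rw [hje]
    exact hKf ⟨j.val, hj⟩ k (le_trans (Finset.le_sup (Finset.mem_univ _)) hk)
  · have hje : j = codaHi m ⟨j.val - m, by have := j.isLt; omega⟩ := by
      apply Fin.ext; simp [codaHi]; omega
    set a : Fin m := ⟨j.val - m, by have := j.isLt; omega⟩
    have h1 := hKf a k (le_trans (Finset.le_sup (Finset.mem_univ a)) hk)
    have hAk := (hInv k).1 a
    have hAk1 := (hInv (k+1)).1 a
    have e1 : p (codaHi m a) k - 1/2 = -(p (codaLo m a) k - 1/2) := by rw [hAk]; ring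
    have e2 : p (codaHi m a) (k+1) - 1/2 = -(p (codaLo m a) (k+1) - 1/2) := by
      rw [hAk1]; ring
    rw [hje]
    constructor
    · rw [e1, abs_neg]; exact h1.1
    · rw [e1, e2, neg_mul_neg]; exact h1.2
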